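/- In the polynomial ring ℂ[a₂, a₃, …, b₃, b₄, …] localized at nothing (i.e., the full arc-space coordinate ring restricted to a₀=a₁=b₀=b₁=b₂=0), the ideal I = (a₂³ − b₃², 3a₂²a₃ − 2b₃b₄) has exactly two minimal primes: one containing (a₂, b₃), namely the prime (a₂, b₃) itself, and one not containing a₂b₃, namely the contraction of I from the localization at a₂b₃. Equivalently, V(I) = V(I : (a₂b₃)^∞) ∪ V(a₂, b₃) and both pieces are irreducible. -/

import Mathlib

open MvPolynomial

/-- The index type of the arc-space variables `a₂, a₃, …` and `b₃, b₄, …`. -/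
abbrev ArcVar : Type := {i : ℕ // 2 ≤ i} ⊕ {j : ℕ // 3 ≤ j}

/-- The arc variable `aᵢ` (for `i ≥ 2`). -/
noncomputable def arcA (i : {i : ℕ // 2 ≤ i}) : MvPolynomial ArcVar ℂ := X (Sum.inl i)

/-- The arc variable `bⱼ` (for `j ≥ 3`). -/
noncomputable def arcB (j : {j : ℕ // 3 ≤ j}) : MvPolynomial ArcVar ℂ := X (Sum.inr j)

/-- The ideal `I = (a₂³ − b₃², 3a₂²a₃ − 2b₃b₄)` of `ℂ[a₂, a₃, …, b₃, b₄, …]`. -/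
noncomputable def arcIdealPoly : Ideal (MvPolynomial ArcVar ℂ) :=
  Ideal.span
    { (arcA ⟨2, le_refl 2⟩) ^ 3 - (arcB ⟨3, le_refl 3⟩) ^ 2,
      3 * (arcA ⟨2, le_refl 2⟩) ^ 2 * arcA ⟨3, Nat.le_succ 2⟩
        - 2 * arcB ⟨3, le_refl 3⟩ * arcB ⟨4, Nat.le_succ 3⟩ }

namespace ArcAux

noncomputable section

/-- The ambient polynomial ring. -/
abbrev R : Type := MvPolynomial ArcVar ℂ

def va2 : ArcVar := Sum.inl ⟨2, le_refl 2⟩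
def va3 : ArcVar := Sum.inl ⟨3, Nat.le_succ 2⟩
def vb3 : ArcVar := Sum.inr ⟨3, le_refl 3⟩
def vb4 : ArcVar := Sum.inr ⟨4, Nat.le_succ 3⟩

def pA : R := X va2
def pA3 : R := X va3
def pB : R := X vb3
def pB4 : R := X vb4

lemma va3_ne_va2 : va3 ≠ va2 := by simp [va3, va2]
lemma vb3_ne_va2 : vb3 ≠ va2 := by simp [vb3, va2]
lemma vb4_ne_va2 : vb4 ≠ va2 := by simp [vb4, va2]
lemma vb4_ne_vb3 : vb4 ≠ vb3 := by simp [vb4, vb3]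
lemma va3_ne_vb3 : va3 ≠ vb3 := by simp [va3, vb3]
lemma va3_ne_vb4 : va3 ≠ vb4 := by simp [va3, vb4]

lemma arcIdeal_eq :
    arcIdealPoly = Ideal.span {pA ^ 3 - pB ^ 2, 3 * pA ^ 2 * pA3 - 2 * pB * pB4} := rfl

lemma g1_mem : pA ^ 3 - pB ^ 2 ∈ arcIdealPoly := by
  rw [arcIdeal_eq]; exact Ideal.subset_span (Set.mem_insert _ _)

lemma g2_mem : 3 * pA ^ 2 * pA3 - 2 * pB * pB4 ∈ arcIdealPoly := by
  rw [arcIdeal_eq]; exact Ideal.subset_span (Set.mem_insert_of_mem _ rfl)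

/-! ### The prime `P₁ = (a₂, b₃)` -/

def P1 : Ideal R := Ideal.span {pA, pB}

lemma pA_mem_P1 : pA ∈ P1 := Ideal.subset_span (Set.mem_insert _ _)
lemma pB_mem_P1 : pB ∈ P1 := Ideal.subset_span (Set.mem_insert_of_mem _ rfl)

lemma I_le_P1 : arcIdealPoly ≤ P1 := by
  rw [arcIdeal_eq, Ideal.span_le]
  rintro x hx
  simp only [Set.mem_insert_iff, Set.mem_singleton_iff] at hx
  rcases hx with rfl | rfl
  · have h : pA ^ 3 - pB ^ 2 = pA ^ 2 * pA - pB * pB := by ring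
    rw [h]
    exact Submodule.sub_mem _ (P1.mul_mem_left _ pA_mem_P1) (P1.mul_mem_left _ pB_mem_P1)
  · have h : 3 * pA ^ 2 * pA3 - 2 * pB * pB4 = (3 * pA * pA3) * pA - (2 * pB4) * pB := by ring
    rw [h]
    exact Submodule.sub_mem _ (P1.mul_mem_left _ pA_mem_P1) (P1.mul_mem_left _ pB_mem_P1)

/-- Evaluation sending `a₂, b₃` to `0`, all other variables to themselves. -/
def eHom : R →ₐ[ℂ] R :=
  aeval (fun v => if v = va2 ∨ v = vb3 then 0 else X v)

lemma eHom_pA : eHom pA = 0 := by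
  rw [eHom, pA, aeval_X, if_pos (Or.inl rfl)]

lemma eHom_pB : eHom pB = 0 := by
  rw [eHom, pB, aeval_X, if_pos (Or.inr rfl)]

lemma eHom_pA3 : eHom pA3 = pA3 := by
  rw [eHom, pA3, aeval_X, if_neg]
  rintro (h | h)
  · exact va3_ne_va2 h
  · exact va3_ne_vb3 h

lemma eHom_pB4 : eHom pB4 = pB4 := by
  rw [eHom, pB4, aeval_X, if_neg]
  rintro (h | h)
  · exact vb4_ne_va2 h
  · exact vb4_ne_vb3 h

lemma P1_le_ker_eHom : P1 ≤ RingHom.ker eHom.toRingHom := by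
  rw [P1, Ideal.span_le]
  rintro x hx
  simp only [Set.mem_insert_iff, Set.mem_singleton_iff] at hx
  rcases hx with rfl | rfl
  · exact RingHom.mem_ker.mpr eHom_pA
  · exact RingHom.mem_ker.mpr eHom_pB

lemma ker_eHom_le_P1 : RingHom.ker eHom.toRingHom ≤ P1 := by
  intro h hh
  have hh' : eHom h = 0 := hh
  have hπ : (Ideal.Quotient.mkₐ ℂ P1).comp eHom = Ideal.Quotient.mkₐ ℂ P1 := by
    apply MvPolynomial.algHom_ext
    intro v
    simp only [AlgHom.comp_apply, eHom, aeval_X]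
    by_cases hv : v = va2 ∨ v = vb3
    · rw [if_pos hv, map_zero]
      have hx : (X v : R) ∈ P1 := by
        rcases hv with rfl | rfl
        · exact pA_mem_P1
        · exact pB_mem_P1
      rw [Ideal.Quotient.mkₐ_eq_mk]
      exact (Ideal.Quotient.eq_zero_iff_mem.mpr hx).symm
    · rw [if_neg hv]
  have h2 := DFunLike.congr_fun hπ h
  rw [AlgHom.comp_apply, hh', map_zero] at h2
  rw [Ideal.Quotient.mkₐ_eq_mk] at h2
  exact Ideal.Quotient.eq_zero_iff_mem.mp h2.symm

lemma P1_eq_ker : P1 = RingHom.ker eHom.toRingHom :=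
  le_antisymm P1_le_ker_eHom ker_eHom_le_P1

lemma P1_prime : P1.IsPrime := by
  rw [P1_eq_ker]; exact RingHom.ker_isPrime _

/-! ### The witness `g = 9 a₂ a₃² − 4 b₄²` -/

def gElt : R := 9 * pA * pA3 ^ 2 - 4 * pB4 ^ 2

lemma g_not_mem_P1 : gElt ∉ P1 := by
  intro hg
  have h0 : eHom gElt = 0 := P1_le_ker_eHom hg
  have h1 : eHom gElt = -(4 * pB4 ^ 2) := by
    simp only [gElt, map_sub, map_mul, map_pow, map_ofNat, eHom_pA, eHom_pA3, eHom_pB4]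
    ring
  rw [h1, neg_eq_zero] at h0
  have h4 : (4 : R) ≠ 0 := by
    rw [show (4 : R) = C (4 : ℂ) from (map_ofNat C 4).symm]
    simp
  have hX : (pB4 : R) ^ 2 ≠ 0 := pow_ne_zero _ (MvPolynomial.X_ne_zero _)
  exact mul_ne_zero h4 hX h0

lemma g_mul_mem : pA ^ 3 * gElt ∈ arcIdealPoly := by
  have h : pA ^ 3 * gElt =
      (-(4 * pB4 ^ 2)) * (pA ^ 3 - pB ^ 2) +
        (3 * pA ^ 2 * pA3 + 2 * pB * pB4) * (3 * pA ^ 2 * pA3 - 2 * pB * pB4) := by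
    rw [gElt]; ring
  rw [h]
  exact Submodule.add_mem _ (arcIdealPoly.mul_mem_left _ g1_mem)
    (arcIdealPoly.mul_mem_left _ g2_mem)

/-! ### The localization away from `a₂ b₃` and the ideal `P₂` -/

abbrev Loc : Type := Localization.Away (pA * pB)

def J : Ideal Loc := Ideal.map (algebraMap R Loc) arcIdealPoly

def P2 : Ideal R := Ideal.comap (algebraMap R Loc) J

lemma I_le_P2 : arcIdealPoly ≤ P2 := Ideal.le_comap_map

lemma isUnit_locA : IsUnit (algebraMap R Loc pA) := by
  have h : IsUnit (algebraMap R Loc (pA * pB)) :=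
    IsLocalization.Away.algebraMap_isUnit (S := Loc) (pA * pB)
  rw [map_mul] at h
  exact isUnit_of_mul_isUnit_left h

lemma isUnit_locB : IsUnit (algebraMap R Loc pB) := by
  have h : IsUnit (algebraMap R Loc (pA * pB)) :=
    IsLocalization.Away.algebraMap_isUnit (S := Loc) (pA * pB)
  rw [map_mul] at h
  exact isUnit_of_mul_isUnit_right h

lemma g_mem_P2 : gElt ∈ P2 := by
  have h1 : algebraMap R Loc (pA ^ 3 * gElt) ∈ J := Ideal.mem_map_of_mem _ g_mul_mem
  rw [map_mul, map_pow] at h1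
  obtain ⟨u, hu⟩ := isUnit_locA.pow 3
  rw [← hu] at h1
  have h2 : algebraMap R Loc gElt = ↑u⁻¹ * (↑u * algebraMap R Loc gElt) :=
    (Units.inv_mul_cancel_left _ _).symm
  show algebraMap R Loc gElt ∈ J
  rw [h2]
  exact J.mul_mem_left _ h1

/-! ### The target domain `BB` and the map `Φ` -/

abbrev BB : Type := Localization.Away (X va2 : R)

instance : IsDomain BB :=
  IsLocalization.isDomain_localization
    (powers_le_nonZeroDivisors_of_noZeroDivisors (MvPolynomial.X_ne_zero _))

def T : BB := algebraMap R BB (X va2)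

lemma isUnit_T : IsUnit T := IsLocalization.Away.algebraMap_isUnit (S := BB) (X va2)

def theta : ArcVar → BB := fun v =>
  if v = va2 then T ^ 2
  else if v = vb3 then T ^ 3
  else if v = vb4 then algebraMap ℂ BB (3 / 2) * T * algebraMap R BB pA3
  else algebraMap R BB (X v)

def Phi : R →ₐ[ℂ] BB := aeval theta

lemma Phi_pA : Phi pA = T ^ 2 := by
  rw [Phi, pA, aeval_X, theta, if_pos rfl]

lemma Phi_pB : Phi pB = T ^ 3 := by
  rw [Phi, pB, aeval_X, theta, if_neg vb3_ne_va2, if_pos rfl]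

lemma Phi_pB4 : Phi pB4 = algebraMap ℂ BB (3 / 2) * T * algebraMap R BB pA3 := by
  rw [Phi, pB4, aeval_X, theta, if_neg vb4_ne_va2, if_neg vb4_ne_vb3, if_pos rfl]

lemma Phi_pA3 : Phi pA3 = algebraMap R BB pA3 := by
  rw [Phi, pA3, aeval_X, theta, if_neg va3_ne_va2, if_neg va3_ne_vb3, if_neg va3_ne_vb4]

lemma two_mul_threehalf (A : Type*) [CommRing A] [Algebra ℂ A] :
    (2 : A) * algebraMap ℂ A (3 / 2) = 3 := by
  rw [show (2 : A) = algebraMap ℂ A 2 from (map_ofNat _ 2).symm, ← map_mul,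
    show (2 : ℂ) * (3 / 2) = 3 by norm_num, map_ofNat]

lemma Phi_g1 : Phi (pA ^ 3 - pB ^ 2) = 0 := by
  rw [map_sub, map_pow, map_pow, Phi_pA, Phi_pB]; ring

lemma Phi_g2 : Phi (3 * pA ^ 2 * pA3 - 2 * pB * pB4) = 0 := by
  have h23 := two_mul_threehalf BB
  rw [map_sub, map_mul, map_mul, map_mul, map_mul, map_ofNat, map_ofNat, map_pow,
    Phi_pA, Phi_pB, Phi_pB4, Phi_pA3]
  linear_combination (-(T ^ 4 * algebraMap R BB pA3)) * h23

lemma isUnit_Phi_f : IsUnit (Phi (pA * pB)) := by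
  rw [map_mul, Phi_pA, Phi_pB]
  exact (isUnit_T.pow 2).mul (isUnit_T.pow 3)

lemma map_Phi_I : Ideal.map Phi.toRingHom arcIdealPoly = ⊥ := by
  rw [arcIdeal_eq, Ideal.map_span, Ideal.span_eq_bot]
  rintro x hx
  simp only [Set.mem_image, Set.mem_insert_iff, Set.mem_singleton_iff] at hx
  obtain ⟨y, (rfl | rfl), rfl⟩ := hx
  · exact Phi_g1
  · exact Phi_g2

def PhiL : Loc →+* BB :=
  IsLocalization.Away.lift (g := Phi.toRingHom) (pA * pB) isUnit_Phi_f

lemma PhiL_comp : PhiL.comp (algebraMap R Loc) = Phi.toRingHom :=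
  IsLocalization.Away.lift_comp _ _

lemma P2_le_ker_Phi : P2 ≤ RingHom.ker Phi.toRingHom := by
  intro h hh
  have hh' : algebraMap R Loc h ∈ J := hh
  have h1 : PhiL (algebraMap R Loc h) ∈ Ideal.map PhiL J := Ideal.mem_map_of_mem _ hh'
  rw [J, Ideal.map_map, PhiL_comp, map_Phi_I, Ideal.mem_bot] at h1
  have h2 : Phi h = PhiL (algebraMap R Loc h) := by
    rw [← RingHom.comp_apply, PhiL_comp]; rfl
  exact RingHom.mem_ker.mpr (h2.trans h1)

/-! ### The quotient `Q' = Loc / J` and the section `Ψ` -/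

abbrev Q' : Type := Loc ⧸ J

def qm : R →ₐ[ℂ] Q' := (Ideal.Quotient.mkₐ ℂ J).comp (IsScalarTower.toAlgHom ℂ R Loc)

lemma qm_apply (x : R) : qm x = Ideal.Quotient.mk J (algebraMap R Loc x) := rfl

lemma qm_eq_zero_of_mem {x : R} (hx : x ∈ arcIdealPoly) : qm x = 0 := by
  rw [qm_apply]
  exact Ideal.Quotient.eq_zero_iff_mem.mpr (Ideal.mem_map_of_mem _ hx)

lemma qm_rel1 : qm pA ^ 3 = qm pB ^ 2 := by
  have h := qm_eq_zero_of_mem g1_mem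
  rw [map_sub, map_pow, map_pow, sub_eq_zero] at h
  exact h

lemma qm_rel2 : 3 * qm pA ^ 2 * qm pA3 = 2 * qm pB * qm pB4 := by
  have h := qm_eq_zero_of_mem g2_mem
  rw [map_sub, map_mul, map_mul, map_mul, map_mul, map_ofNat, map_ofNat, map_pow,
    sub_eq_zero] at h
  exact h

lemma isUnit_qmA : IsUnit (qm pA) := by
  rw [qm_apply]; exact isUnit_locA.map _

lemma isUnit_qmB : IsUnit (qm pB) := by
  rw [qm_apply]; exact isUnit_locB.map _

def tau : Q' := Ring.inverse (qm pA) * qm pB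

lemma hinv : Ring.inverse (qm pA) * qm pA = 1 :=
  Ring.inverse_mul_cancel _ isUnit_qmA

lemma tau_sq : tau ^ 2 = qm pA := by
  calc tau ^ 2 = Ring.inverse (qm pA) ^ 2 * qm pB ^ 2 := by rw [tau]; ring
    _ = Ring.inverse (qm pA) ^ 2 * qm pA ^ 3 := by rw [qm_rel1]
    _ = (Ring.inverse (qm pA) * qm pA) ^ 2 * qm pA := by ring
    _ = qm pA := by rw [hinv]; ring

lemma tau_cube : tau ^ 3 = qm pB := by
  calc tau ^ 3 = Ring.inverse (qm pA) ^ 3 * qm pB ^ 2 * qm pB := by rw [tau]; ring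
    _ = Ring.inverse (qm pA) ^ 3 * qm pA ^ 3 * qm pB := by rw [qm_rel1]
    _ = (Ring.inverse (qm pA) * qm pA) ^ 3 * qm pB := by ring
    _ = qm pB := by rw [hinv]; ring

lemma rel3 : 3 * qm pB * qm pA3 = 2 * qm pA * qm pB4 := by
  apply (isUnit_qmA.pow 2).mul_left_cancel
  calc qm pA ^ 2 * (3 * qm pB * qm pA3)
      = qm pB * (3 * qm pA ^ 2 * qm pA3) := by ring
    _ = qm pB * (2 * qm pB * qm pB4) := by rw [qm_rel2]
    _ = qm pB ^ 2 * (2 * qm pB4) := by ring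
    _ = qm pA ^ 3 * (2 * qm pB4) := by rw [qm_rel1]
    _ = qm pA ^ 2 * (2 * qm pA * qm pB4) := by ring

lemma isUnit_two_Q : IsUnit (2 : Q') := by
  rw [show (2 : Q') = algebraMap ℂ Q' 2 from (map_ofNat _ 2).symm]
  exact (isUnit_iff_ne_zero.mpr two_ne_zero).map _

lemma tau_b4 : algebraMap ℂ Q' (3 / 2) * tau * qm pA3 = qm pB4 := by
  apply (isUnit_two_Q.mul isUnit_qmA).mul_left_cancel
  have h23 := two_mul_threehalf Q'
  calc (2 : Q') * qm pA * (algebraMap ℂ Q' (3 / 2) * tau * qm pA3)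
      = ((2 : Q') * algebraMap ℂ Q' (3 / 2)) * ((Ring.inverse (qm pA) * qm pA) *
          (qm pB * qm pA3)) := by rw [tau]; ring
    _ = 3 * (qm pB * qm pA3) := by rw [h23, hinv]; ring
    _ = 2 * qm pA * qm pB4 := by linear_combination rel3
    _ = (2 : Q') * qm pA * qm pB4 := by ring

def eta : ArcVar → Q' := fun v => if v = va2 then tau else qm (X v)

def PsiZ : R →ₐ[ℂ] Q' := aeval eta

lemma PsiZ_va2 : PsiZ (X va2) = tau := by rw [PsiZ, aeval_X, eta, if_pos rfl]

lemma PsiZ_other {v : ArcVar} (h : v ≠ va2) : PsiZ (X v) = qm (X v) := by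
  rw [PsiZ, aeval_X, eta, if_neg h]

lemma isUnit_PsiZ_X : IsUnit (PsiZ.toRingHom (X va2)) := by
  show IsUnit (PsiZ (X va2))
  rw [PsiZ_va2, tau]
  exact (isUnit_ringInverse.mpr isUnit_qmA).mul isUnit_qmB

def Psi : BB →+* Q' :=
  IsLocalization.Away.lift (g := PsiZ.toRingHom) (X va2) isUnit_PsiZ_X

lemma Psi_comp : Psi.comp (algebraMap R BB) = PsiZ.toRingHom :=
  IsLocalization.Away.lift_comp _ _

lemma Psi_alg (x : R) : Psi (algebraMap R BB x) = PsiZ x := by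
  rw [← RingHom.comp_apply, Psi_comp]; rfl

def PsiA : BB →ₐ[ℂ] Q' :=
  { toRingHom := Psi
    commutes' := fun c => by
      have h : (algebraMap ℂ BB c) = algebraMap R BB (C c) := by
        rw [IsScalarTower.algebraMap_apply ℂ R BB, MvPolynomial.algebraMap_eq]
      show Psi (algebraMap ℂ BB c) = algebraMap ℂ Q' c
      rw [h, Psi_alg]
      exact PsiZ.commutes c }

lemma PsiA_apply (x : BB) : PsiA x = Psi x := rfl

lemma PsiA_T : PsiA T = tau := by
  rw [PsiA_apply, T, Psi_alg, PsiZ_va2]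

lemma Psi_comp_Phi : PsiA.comp Phi = qm := by
  apply MvPolynomial.algHom_ext
  intro v
  rw [AlgHom.comp_apply]
  rw [show Phi (X v) = theta v from aeval_X _ _]
  by_cases h2 : v = va2
  · subst h2
    rw [theta, if_pos rfl, map_pow, PsiA_T, tau_sq]
    rfl
  · by_cases h3 : v = vb3
    · subst h3
      rw [theta, if_neg vb3_ne_va2, if_pos rfl, map_pow, PsiA_T, tau_cube]
      rfl
    · by_cases h4 : v = vb4
      · subst h4
        rw [theta, if_neg vb4_ne_va2, if_neg vb4_ne_vb3, if_pos rfl,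
          map_mul, map_mul, PsiA_T, PsiA.commutes, PsiA_apply, Psi_alg,
          PsiZ, pA3, aeval_X, eta, if_neg va3_ne_va2]
        exact tau_b4
      · rw [theta, if_neg h2, if_neg h3, if_neg h4, PsiA_apply, Psi_alg,
          PsiZ_other h2]

lemma ker_Phi_le_P2 : RingHom.ker Phi.toRingHom ≤ P2 := by
  intro h hh
  have hh' : Phi h = 0 := hh
  have h1 := DFunLike.congr_fun Psi_comp_Phi h
  rw [AlgHom.comp_apply, hh', map_zero] at h1
  have h2 : algebraMap R Loc h ∈ J := by
    rw [← Ideal.Quotient.eq_zero_iff_mem]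
    exact h1.symm ▸ rfl
  exact h2

lemma P2_eq_ker : P2 = RingHom.ker Phi.toRingHom :=
  le_antisymm P2_le_ker_Phi ker_Phi_le_P2

lemma P2_prime : P2.IsPrime := by
  rw [P2_eq_ker]; exact RingHom.ker_isPrime _

lemma f_not_mem_P2 : pA * pB ∉ P2 := by
  intro h
  have h0 : Phi (pA * pB) = 0 := P2_le_ker_Phi h
  exact isUnit_Phi_f.ne_zero h0

/-! ### Comparison lemmas -/

lemma P1_le_of_f_mem {p : Ideal R} (hp : p.IsPrime) (hIp : arcIdealPoly ≤ p)
    (hf : pA * pB ∈ p) : P1 ≤ p := by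
  have hg1 := hIp g1_mem
  have key : pA ∈ p ∧ pB ∈ p := by
    rcases hp.mem_or_mem hf with hA | hB
    · refine ⟨hA, ?_⟩
      have h1 : pB ^ 2 ∈ p := by
        have h : pB ^ 2 = pA ^ 2 * pA - (pA ^ 3 - pB ^ 2) := by ring
        rw [h]
        exact Submodule.sub_mem _ (p.mul_mem_left _ hA) hg1
      exact hp.mem_of_pow_mem 2 h1
    · refine ⟨?_, hB⟩
      have h1 : pA ^ 3 ∈ p := by
        have h : pA ^ 3 = (pA ^ 3 - pB ^ 2) + pB * pB := by ring
        rw [h]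
        exact Submodule.add_mem _ hg1 (p.mul_mem_left _ hB)
      exact hp.mem_of_pow_mem 3 h1
  rw [P1, Ideal.span_le]
  rintro x hx
  simp only [Set.mem_insert_iff, Set.mem_singleton_iff] at hx
  rcases hx with rfl | rfl
  · exact key.1
  · exact key.2

lemma P2_le_of_f_not_mem {p : Ideal R} (hp : p.IsPrime) (hIp : arcIdealPoly ≤ p)
    (hf : pA * pB ∉ p) : P2 ≤ p := by
  have hd : Disjoint ((Submonoid.powers (pA * pB) : Submonoid R) : Set R) (p : Set R) := by
    rw [Set.disjoint_left]
    rintro x ⟨n, rfl⟩ hxp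
    exact hf (hp.mem_of_pow_mem n hxp)
  have hcm := IsLocalization.comap_map_of_isPrime_disjoint
    (Submonoid.powers (pA * pB)) Loc hp hd
  intro x hx
  have hx' : algebraMap R Loc x ∈ J := hx
  have h1 : algebraMap R Loc x ∈ Ideal.map (algebraMap R Loc) p :=
    Ideal.map_mono hIp hx'
  rw [← hcm]
  exact h1

lemma main :
    arcIdealPoly.minimalPrimes = {P1, P2} := by
  ext p
  simp only [Set.mem_insert_iff, Set.mem_singleton_iff]
  constructor
  · rintro ⟨⟨hp, hIp⟩, hmin⟩
    by_cases hf : pA * pB ∈ p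
    · left
      have h1 := P1_le_of_f_mem hp hIp hf
      exact le_antisymm (hmin ⟨P1_prime, I_le_P1⟩ h1) h1
    · right
      have h1 := P2_le_of_f_not_mem hp hIp hf
      exact le_antisymm (hmin ⟨P2_prime, I_le_P2⟩ h1) h1
  · rintro (rfl | rfl)
    · refine ⟨⟨P1_prime, I_le_P1⟩, fun q hq hle => ?_⟩
      by_cases hf : pA * pB ∈ q
      · exact P1_le_of_f_mem hq.1 hq.2 hf
      · exact absurd (hle (P2_le_of_f_not_mem hq.1 hq.2 hf g_mem_P2)) g_not_mem_P1
    · refine ⟨⟨P2_prime, I_le_P2⟩, fun q hq hle => ?_⟩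
      exact P2_le_of_f_not_mem hq.1 hq.2 (fun hf => f_not_mem_P2 (hle hf))

end

end ArcAux

/-- In `ℂ[a₂, a₃, …, b₃, b₄, …]`, the ideal `I = (a₂³ − b₃², 3a₂²a₃ − 2b₃b₄)` has
exactly two minimal primes: the prime `(a₂, b₃)`, and the contraction of `I` from
the localization at `a₂b₃`. -/
theorem arcIdeal_minimalPrimes :
    arcIdealPoly.minimalPrimes =
      { Ideal.span {arcA ⟨2, le_refl 2⟩, arcB ⟨3, le_refl 3⟩},
        Ideal.comap
          (algebraMap (MvPolynomial ArcVar ℂ)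
            (Localization.Away (arcA ⟨2, le_refl 2⟩ * arcB ⟨3, le_refl 3⟩)))
          (Ideal.map
            (algebraMap (MvPolynomial ArcVar ℂ)
              (Localization.Away (arcA ⟨2, le_refl 2⟩ * arcB ⟨3, le_refl 3⟩)))
            arcIdealPoly) } :=
  ArcAux.main
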